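/- Let q > 2 and let C' ⊆ ℤ_q^m be single-error-correcting for the channel ℛ_q with |C'| = K. Identify ℤ_q with {0,1,…,q−1} ⊆ ℤ and define the concatenated code C = {z ∈ {0,…,q−1}^{2m} : ((z_{2j} − z_{2j−1}) mod q)_{j=1,…,m} ∈ C'}. Then |C| = q^m·K and Δ(x,y) ≥ 2 for all distinct x, y ∈ C, i.e., C is a 1-code of length 2m over the q-ary asymmetric channel. -/

import Mathlib

/-- `N(x,y) = Σᵢ max(yᵢ - xᵢ, 0)` for words over `{0,…,q-1} ⊆ ℤ`. -/
def Nasym {n q : ℕ} (x y : Fin n → Fin q) : ℤ :=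
  ∑ i, max (((y i : ℕ) : ℤ) - ((x i : ℕ) : ℤ)) 0

/-- The asymmetric distance `Δ(x,y) = max(N(x,y), N(y,x))`. -/
def Dasym {n q : ℕ} (x y : Fin n → Fin q) : ℤ :=
  max (Nasym x y) (Nasym y x)

/-- The `ℛ_q`-ball of `c ∈ ℤ_qᵐ`: words obtained from `c` by changing at most one
coordinate by `±1 (mod q)`. -/
def RBall {q m : ℕ} (c : Fin m → ZMod q) : Set (Fin m → ZMod q) :=
  {d | d = c ∨ ∃ i, (d i = c i + 1 ∨ d i = c i - 1) ∧ ∀ j, j ≠ i → d j = c j}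

/-- The word of pairwise differences `((z_{2j} - z_{2j-1}) mod q)_{j=1,…,m}` of a word
`z ∈ {0,…,q-1}^{2m}` (0-based: `z_{2j+1} - z_{2j}`). -/
def pairDiff (q m : ℕ) (z : Fin (2 * m) → Fin q) : Fin m → ZMod q :=
  fun j => ((z ⟨2 * (j : ℕ) + 1, by have := j.isLt; omega⟩ : ℕ) : ZMod q) -
           ((z ⟨2 * (j : ℕ), by have := j.isLt; omega⟩ : ℕ) : ZMod q)

namespace ConcatAux

variable {q m n : ℕ}

def evI (m : ℕ) (j : Fin m) : Fin (2 * m) := ⟨2 * (j : ℕ), by have := j.isLt; omega⟩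
def odI (m : ℕ) (j : Fin m) : Fin (2 * m) := ⟨2 * (j : ℕ) + 1, by have := j.isLt; omega⟩

lemma pairDiff_apply (z : Fin (2 * m) → Fin q) (j : Fin m) :
    pairDiff q m z j = ((z (odI m j) : ℕ) : ZMod q) - ((z (evI m j) : ℕ) : ZMod q) := rfl

lemma ev_or_od (i : Fin (2 * m)) (j : Fin m) (hj : (j : ℕ) = (i : ℕ) / 2) :
    i = evI m j ∨ i = odI m j := by
  rcases Nat.mod_two_eq_zero_or_one (i : ℕ) with h | h
  · left; apply Fin.ext; simp only [evI]; omega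
  · right; apply Fin.ext; simp only [odI]; omega

lemma single_le {x y : Fin n → Fin q} (h : Nasym x y ≤ 1) (i : Fin n) :
    ((y i : ℕ) : ℤ) ≤ ((x i : ℕ) : ℤ) + 1 := by
  have h1 : max (((y i : ℕ) : ℤ) - ((x i : ℕ) : ℤ)) 0 ≤ Nasym x y :=
    Finset.single_le_sum (f := fun j => max (((y j : ℕ) : ℤ) - ((x j : ℕ) : ℤ)) 0)
      (fun j _ => le_max_right _ _) (Finset.mem_univ i)
  have h2 := le_max_left (((y i : ℕ) : ℤ) - ((x i : ℕ) : ℤ)) (0 : ℤ)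
  linarith

lemma pair_le {x y : Fin n → Fin q} (h : Nasym x y ≤ 1) {i i' : Fin n} (hne : i ≠ i')
    (hi : ((x i : ℕ) : ℤ) < ((y i : ℕ) : ℤ)) : ((y i' : ℕ) : ℤ) ≤ ((x i' : ℕ) : ℤ) := by
  by_contra hc
  push_neg at hc
  have hsum : ∑ j ∈ ({i, i'} : Finset (Fin n)), max (((y j : ℕ) : ℤ) - ((x j : ℕ) : ℤ)) 0
      ≤ Nasym x y :=
    Finset.sum_le_sum_of_subset_of_nonneg (Finset.subset_univ _)
      (fun j _ _ => le_max_right _ _)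
  rw [Finset.sum_pair hne] at hsum
  have t1 : (1 : ℤ) ≤ max (((y i : ℕ) : ℤ) - ((x i : ℕ) : ℤ)) 0 :=
    le_max_of_le_left (by omega)
  have t2 : (1 : ℤ) ≤ max (((y i' : ℕ) : ℤ) - ((x i' : ℕ) : ℤ)) 0 :=
    le_max_of_le_left (by omega)
  linarith

lemma cdiff (x y : Fin (2 * m) → Fin q) (j : Fin m) (a b : ℤ)
    (ha : ((y (evI m j) : ℕ) : ℤ) = ((x (evI m j) : ℕ) : ℤ) + a)
    (hb : ((y (odI m j) : ℕ) : ℤ) = ((x (odI m j) : ℕ) : ℤ) + b) :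
    pairDiff q m y j = pairDiff q m x j + ((b - a : ℤ) : ZMod q) := by
  have ha' := congrArg (fun t : ℤ => (t : ZMod q)) ha
  have hb' := congrArg (fun t : ℤ => (t : ZMod q)) hb
  rw [pairDiff_apply, pairDiff_apply]
  push_cast at ha' hb' ⊢
  rw [ha', hb']; ring

lemma contra_one [NeZero q] (h1 : (1 : ZMod q) ≠ 0) {C' : Set (Fin m → ZMod q)}
    (hsec : ∀ c ∈ C', ∀ c' ∈ C', c ≠ c' → Disjoint (RBall c) (RBall c'))
    {c c' : Fin m → ZMod q} (hc : c ∈ C') (hc' : c' ∈ C') (j₀ : Fin m)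
    (hmid : c' j₀ = c j₀ + 1 ∨ c' j₀ = c j₀ - 1)
    (hrest : ∀ j, j ≠ j₀ → c' j = c j) : False := by
  have hne : c ≠ c' := by
    intro hcc
    rcases hmid with h | h
    · rw [← hcc, left_eq_add] at h; exact h1 h
    · exact h1 (sub_eq_self.mp (by rw [← hcc] at h; exact h.symm))
  exact Set.disjoint_left.mp (hsec c hc c' hc' hne)
    (Or.inr ⟨j₀, hmid, hrest⟩) (Or.inl rfl)

lemma contra_twopair [NeZero q] (h1 : (1 : ZMod q) ≠ 0) {C' : Set (Fin m → ZMod q)}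
    (hsec : ∀ c ∈ C', ∀ c' ∈ C', c ≠ c' → Disjoint (RBall c) (RBall c'))
    {c c' : Fin m → ZMod q} (hc : c ∈ C') (hc' : c' ∈ C') (j₀ j₁ : Fin m) (hjj : j₀ ≠ j₁)
    (h₀ : c' j₀ = c j₀ + 1 ∨ c' j₀ = c j₀ - 1)
    (h₁ : c' j₁ = c j₁ + 1 ∨ c' j₁ = c j₁ - 1)
    (hrest : ∀ j, j ≠ j₀ → j ≠ j₁ → c' j = c j) : False := by
  have hne : c ≠ c' := by
    intro hcc
    rcases h₀ with h | h
    · rw [← hcc, left_eq_add] at h; exact h1 h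
    · exact h1 (sub_eq_self.mp (by rw [← hcc] at h; exact h.symm))
  set e := Function.update c' j₁ (c j₁) with he
  have he₀ : e j₀ = c' j₀ := Function.update_of_ne hjj _ _
  have hmem1 : e ∈ RBall c := by
    refine Or.inr ⟨j₀, by rw [he₀]; exact h₀, ?_⟩
    intro j hj
    by_cases hj1 : j = j₁
    · subst hj1; rw [he, Function.update_self]
    · rw [he, Function.update_of_ne hj1]; exact hrest j hj hj1
  have hmem2 : e ∈ RBall c' := by
    refine Or.inr ⟨j₁, ?_, fun j hj => by rw [he]; exact Function.update_of_ne hj _ _⟩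
    rcases h₁ with h | h
    · right; rw [he, Function.update_self, h]; ring
    · left; rw [he, Function.update_self, h]; ring
  exact Set.disjoint_left.mp (hsec c hc c' hc' hne) hmem1 hmem2

lemma contra_samepair [NeZero q] (htwo : ((2 : ℤ) : ZMod q) ≠ 0) {C' : Set (Fin m → ZMod q)}
    (hsec : ∀ c ∈ C', ∀ c' ∈ C', c ≠ c' → Disjoint (RBall c) (RBall c'))
    {c c' : Fin m → ZMod q} (hc : c ∈ C') (hc' : c' ∈ C') (j₀ : Fin m)
    (h₀ : c' j₀ = c j₀ + ((2 : ℤ) : ZMod q) ∨ c' j₀ = c j₀ - ((2 : ℤ) : ZMod q))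
    (hrest : ∀ j, j ≠ j₀ → c' j = c j) : False := by
  have hne : c ≠ c' := by
    intro hcc
    rcases h₀ with h | h
    · rw [← hcc, left_eq_add] at h; exact htwo h
    · exact htwo (sub_eq_self.mp (by rw [← hcc] at h; exact h.symm))
  rcases h₀ with h | h
  · set e := Function.update c j₀ (c j₀ + 1) with he
    have hmem1 : e ∈ RBall c :=
      Or.inr ⟨j₀, Or.inl (by rw [he, Function.update_self]),
        fun j hj => by rw [he]; exact Function.update_of_ne hj _ _⟩
    have hmem2 : e ∈ RBall c' := by
      refine Or.inr ⟨j₀, Or.inr ?_, ?_⟩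
      · rw [he, Function.update_self, h]; push_cast; ring
      · intro j hj; rw [he, Function.update_of_ne hj, hrest j hj]
    exact Set.disjoint_left.mp (hsec c hc c' hc' hne) hmem1 hmem2
  · set e := Function.update c j₀ (c j₀ - 1) with he
    have hmem1 : e ∈ RBall c :=
      Or.inr ⟨j₀, Or.inr (by rw [he, Function.update_self]),
        fun j hj => by rw [he]; exact Function.update_of_ne hj _ _⟩
    have hmem2 : e ∈ RBall c' := by
      refine Or.inr ⟨j₀, Or.inl ?_, ?_⟩
      · rw [he, Function.update_self, h]; push_cast; ring
      · intro j hj; rw [he, Function.update_of_ne hj, hrest j hj]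
    exact Set.disjoint_left.mp (hsec c hc c' hc' hne) hmem1 hmem2

lemma key (q m : ℕ) (hq : 2 < q) (C' : Set (Fin m → ZMod q))
    (hsec : ∀ c ∈ C', ∀ c' ∈ C', c ≠ c' → Disjoint (RBall c) (RBall c'))
    (x y : Fin (2 * m) → Fin q) (hx : pairDiff q m x ∈ C') (hy : pairDiff q m y ∈ C')
    (h1 : Nasym x y ≤ 1) (h2 : Nasym y x ≤ 1)
    (i₀ : Fin (2 * m)) (hi₀ : ((x i₀ : ℕ) : ℤ) + 1 = ((y i₀ : ℕ) : ℤ)) : False := by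
  haveI : NeZero q := ⟨by omega⟩
  haveI : Fact (1 < q) := ⟨by omega⟩
  have hone : (1 : ZMod q) ≠ 0 := one_ne_zero
  have htwo : ((2 : ℤ) : ZMod q) ≠ 0 := by
    intro h
    have hv : ((2 : ℕ) : ZMod q).val = 2 := ZMod.val_cast_of_lt hq
    rw [show ((2 : ℕ) : ZMod q) = ((2 : ℤ) : ZMod q) by push_cast; ring, h,
      ZMod.val_zero] at hv
    omega
  have hj₀lt : (i₀ : ℕ) / 2 < m := by have := i₀.isLt; omega
  set j₀ : Fin m := ⟨(i₀ : ℕ) / 2, hj₀lt⟩ with hj₀def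
  have hpos : ∀ i, i ≠ i₀ → ((y i : ℕ) : ℤ) ≤ ((x i : ℕ) : ℤ) :=
    fun i hi => pair_le h1 (Ne.symm hi) (by omega)
  by_cases hneg : ∃ i₁, ((y i₁ : ℕ) : ℤ) + 1 = ((x i₁ : ℕ) : ℤ)
  · -- one +1 and one -1
    obtain ⟨i₁, hi₁⟩ := hneg
    have hne01 : i₁ ≠ i₀ := by intro h; rw [h] at hi₁; omega
    have hnegu : ∀ i, i ≠ i₁ → ((x i : ℕ) : ℤ) ≤ ((y i : ℕ) : ℤ) :=
      fun i hi => pair_le h2 (Ne.symm hi) (by omega)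
    have heq : ∀ i, i ≠ i₀ → i ≠ i₁ → y i = x i := by
      intro i h0 h1'
      have := hpos i h0
      have := hnegu i h1'
      exact Fin.ext (by omega)
    have hj₁lt : (i₁ : ℕ) / 2 < m := by have := i₁.isLt; omega
    set j₁ : Fin m := ⟨(i₁ : ℕ) / 2, hj₁lt⟩ with hj₁def
    by_cases hpair : (i₀ : ℕ) / 2 = (i₁ : ℕ) / 2
    · -- same pair
      have hj10 : j₁ = j₀ := Fin.ext (by simp [hj₀def, hj₁def, hpair])
      have hrest : ∀ j, j ≠ j₀ → pairDiff q m y j = pairDiff q m x j := by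
        intro j hj
        have hjv : (j : ℕ) ≠ (i₀ : ℕ) / 2 := fun hh => hj (Fin.ext hh)
        have he : evI m j ≠ i₀ := by
          intro hh; apply hjv; have := congrArg Fin.val hh; simp only [evI] at this; omega
        have ho : odI m j ≠ i₀ := by
          intro hh; apply hjv; have := congrArg Fin.val hh; simp only [odI] at this; omega
        have he1 : evI m j ≠ i₁ := by
          intro hh; apply hjv; have := congrArg Fin.val hh; simp only [evI] at this; omega
        have ho1 : odI m j ≠ i₁ := by
          intro hh; apply hjv; have := congrArg Fin.val hh; simp only [odI] at this; omega
        rw [pairDiff_apply, pairDiff_apply, heq _ he he1, heq _ ho ho1]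
      rcases ev_or_od i₀ j₀ rfl with h0 | h0
      · -- i₀ even slot, so i₁ odd slot
        have h1' : i₁ = odI m j₀ := by
          apply Fin.ext
          have hv0 := congrArg Fin.val h0
          simp only [evI, odI] at hv0 ⊢
          have : i₁ ≠ i₀ := hne01
          have hvne : (i₁ : ℕ) ≠ (i₀ : ℕ) := fun hh => this (Fin.ext hh)
          omega
        have ha : ((y (evI m j₀) : ℕ) : ℤ) = ((x (evI m j₀) : ℕ) : ℤ) + 1 := by
          rw [← h0]; omega
        have hb : ((y (odI m j₀) : ℕ) : ℤ) = ((x (odI m j₀) : ℕ) : ℤ) + (-1) := by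
          rw [← h1']; omega
        have hcd := cdiff x y j₀ 1 (-1) ha hb
        refine contra_samepair htwo hsec hx hy j₀ (Or.inr ?_) hrest
        rw [hcd]; push_cast; ring
      · -- i₀ odd slot, so i₁ even slot
        have h1' : i₁ = evI m j₀ := by
          apply Fin.ext
          have hv0 := congrArg Fin.val h0
          simp only [evI, odI] at hv0 ⊢
          have hvne : (i₁ : ℕ) ≠ (i₀ : ℕ) := fun hh => hne01 (Fin.ext hh)
          omega
        have ha : ((y (evI m j₀) : ℕ) : ℤ) = ((x (evI m j₀) : ℕ) : ℤ) + (-1) := by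
          rw [← h1']; omega
        have hb : ((y (odI m j₀) : ℕ) : ℤ) = ((x (odI m j₀) : ℕ) : ℤ) + 1 := by
          rw [← h0]; omega
        have hcd := cdiff x y j₀ (-1) 1 ha hb
        refine contra_samepair htwo hsec hx hy j₀ (Or.inl ?_) hrest
        rw [hcd]; push_cast; ring
    · -- different pairs
      have hjj : j₀ ≠ j₁ := by
        intro hh; exact hpair (congrArg Fin.val hh)
      -- value at slots not i₀, i₁ equal
      have hslot : ∀ (i : Fin (2 * m)), i ≠ i₀ → i ≠ i₁ → y i = x i := heq
      have h₀ : pairDiff q m y j₀ = pairDiff q m x j₀ + 1 ∨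
          pairDiff q m y j₀ = pairDiff q m x j₀ - 1 := by
        rcases ev_or_od i₀ j₀ rfl with h0 | h0
        · -- i₀ even: other slot is odd, untouched
          have ho : odI m j₀ ≠ i₀ := by
            intro hh; have := congrArg Fin.val hh; have hv0 := congrArg Fin.val h0
            simp only [evI, odI] at this hv0; omega
          have ho1 : odI m j₀ ≠ i₁ := by
            intro hh; apply hpair; have := congrArg Fin.val hh
            simp only [odI] at this; have hv : (j₀ : ℕ) = (i₀ : ℕ) / 2 := rfl; omega
          have ha : ((y (evI m j₀) : ℕ) : ℤ) = ((x (evI m j₀) : ℕ) : ℤ) + 1 := by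
            rw [← h0]; omega
          have hb : ((y (odI m j₀) : ℕ) : ℤ) = ((x (odI m j₀) : ℕ) : ℤ) + 0 := by
            rw [heq _ ho ho1]; ring
          right
          have hcd := cdiff x y j₀ 1 0 ha hb
          rw [hcd]; push_cast; ring
        · have he : evI m j₀ ≠ i₀ := by
            intro hh; have := congrArg Fin.val hh; have hv0 := congrArg Fin.val h0
            simp only [evI, odI] at this hv0; omega
          have he1 : evI m j₀ ≠ i₁ := by
            intro hh; apply hpair; have := congrArg Fin.val hh
            simp only [evI] at this; have hv : (j₀ : ℕ) = (i₀ : ℕ) / 2 := rfl; omega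
          have ha : ((y (evI m j₀) : ℕ) : ℤ) = ((x (evI m j₀) : ℕ) : ℤ) + 0 := by
            rw [heq _ he he1]; ring
          have hb : ((y (odI m j₀) : ℕ) : ℤ) = ((x (odI m j₀) : ℕ) : ℤ) + 1 := by
            rw [← h0]; omega
          left
          have hcd := cdiff x y j₀ 0 1 ha hb
          rw [hcd]; push_cast; ring
      have h₁ : pairDiff q m y j₁ = pairDiff q m x j₁ + 1 ∨
          pairDiff q m y j₁ = pairDiff q m x j₁ - 1 := by
        rcases ev_or_od i₁ j₁ rfl with h0 | h0
        · have ho : odI m j₁ ≠ i₀ := by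
            intro hh; apply hpair; have := congrArg Fin.val hh
            simp only [odI] at this; have hv : (j₁ : ℕ) = (i₁ : ℕ) / 2 := rfl; omega
          have ho1 : odI m j₁ ≠ i₁ := by
            intro hh; have := congrArg Fin.val hh; have hv0 := congrArg Fin.val h0
            simp only [evI, odI] at this hv0; omega
          have ha : ((y (evI m j₁) : ℕ) : ℤ) = ((x (evI m j₁) : ℕ) : ℤ) + (-1) := by
            rw [← h0]; omega
          have hb : ((y (odI m j₁) : ℕ) : ℤ) = ((x (odI m j₁) : ℕ) : ℤ) + 0 := by
            rw [heq _ ho ho1]; ring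
          left
          have hcd := cdiff x y j₁ (-1) 0 ha hb
          rw [hcd]; push_cast; ring
        · have he : evI m j₁ ≠ i₀ := by
            intro hh; apply hpair; have := congrArg Fin.val hh
            simp only [evI] at this; have hv : (j₁ : ℕ) = (i₁ : ℕ) / 2 := rfl; omega
          have he1 : evI m j₁ ≠ i₁ := by
            intro hh; have := congrArg Fin.val hh; have hv0 := congrArg Fin.val h0
            simp only [evI, odI] at this hv0; omega
          have ha : ((y (evI m j₁) : ℕ) : ℤ) = ((x (evI m j₁) : ℕ) : ℤ) + 0 := by
            rw [heq _ he he1]; ring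
          have hb : ((y (odI m j₁) : ℕ) : ℤ) = ((x (odI m j₁) : ℕ) : ℤ) + (-1) := by
            rw [← h0]; omega
          right
          have hcd := cdiff x y j₁ 0 (-1) ha hb
          rw [hcd]; push_cast; ring
      have hrest : ∀ j, j ≠ j₀ → j ≠ j₁ → pairDiff q m y j = pairDiff q m x j := by
        intro j hj0 hj1
        have hjv0 : (j : ℕ) ≠ (i₀ : ℕ) / 2 := fun hh => hj0 (Fin.ext hh)
        have hjv1 : (j : ℕ) ≠ (i₁ : ℕ) / 2 := fun hh => hj1 (Fin.ext hh)
        have he : evI m j ≠ i₀ := by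
          intro hh; apply hjv0; have := congrArg Fin.val hh; simp only [evI] at this; omega
        have ho : odI m j ≠ i₀ := by
          intro hh; apply hjv0; have := congrArg Fin.val hh; simp only [odI] at this; omega
        have he1 : evI m j ≠ i₁ := by
          intro hh; apply hjv1; have := congrArg Fin.val hh; simp only [evI] at this; omega
        have ho1 : odI m j ≠ i₁ := by
          intro hh; apply hjv1; have := congrArg Fin.val hh; simp only [odI] at this; omega
        rw [pairDiff_apply, pairDiff_apply, heq _ he he1, heq _ ho ho1]
      exact contra_twopair hone hsec hx hy j₀ j₁ hjj h₀ h₁ hrest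
  · -- only one changed coordinate
    push_neg at hneg
    have heq : ∀ i, i ≠ i₀ → y i = x i := by
      intro i hi
      have := hpos i hi
      have := single_le h2 i
      have := hneg i
      exact Fin.ext (by omega)
    have hrest : ∀ j, j ≠ j₀ → pairDiff q m y j = pairDiff q m x j := by
      intro j hj
      have hjv : (j : ℕ) ≠ (i₀ : ℕ) / 2 := fun hh => hj (Fin.ext hh)
      have he : evI m j ≠ i₀ := by
        intro hh; apply hjv; have := congrArg Fin.val hh; simp only [evI] at this; omega
      have ho : odI m j ≠ i₀ := by
        intro hh; apply hjv; have := congrArg Fin.val hh; simp only [odI] at this; omega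
      rw [pairDiff_apply, pairDiff_apply, heq _ he, heq _ ho]
    have hmid : pairDiff q m y j₀ = pairDiff q m x j₀ + 1 ∨
        pairDiff q m y j₀ = pairDiff q m x j₀ - 1 := by
      rcases ev_or_od i₀ j₀ rfl with h0 | h0
      · have ho : odI m j₀ ≠ i₀ := by
          intro hh; have := congrArg Fin.val hh; have hv0 := congrArg Fin.val h0
          simp only [evI, odI] at this hv0; omega
        have ha : ((y (evI m j₀) : ℕ) : ℤ) = ((x (evI m j₀) : ℕ) : ℤ) + 1 := by
          rw [← h0]; omega
        have hb : ((y (odI m j₀) : ℕ) : ℤ) = ((x (odI m j₀) : ℕ) : ℤ) + 0 := by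
          rw [heq _ ho]; ring
        right
        have hcd := cdiff x y j₀ 1 0 ha hb
        rw [hcd]; push_cast; ring
      · have he : evI m j₀ ≠ i₀ := by
          intro hh; have := congrArg Fin.val hh; have hv0 := congrArg Fin.val h0
          simp only [evI, odI] at this hv0; omega
        have ha : ((y (evI m j₀) : ℕ) : ℤ) = ((x (evI m j₀) : ℕ) : ℤ) + 0 := by
          rw [heq _ he]; ring
        have hb : ((y (odI m j₀) : ℕ) : ℤ) = ((x (odI m j₀) : ℕ) : ℤ) + 1 := by
          rw [← h0]; omega
        left
        have hcd := cdiff x y j₀ 0 1 ha hb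
        rw [hcd]; push_cast; ring
    exact contra_one hone hsec hx hy j₀ hmid hrest

/-- The inverse map: reassemble a word from its even part and pair differences. -/
def unsplit (q m : ℕ) [NeZero q] (p : (Fin m → Fin q) × (Fin m → ZMod q))
    (i : Fin (2 * m)) : Fin q :=
  if _ : (i : ℕ) % 2 = 0 then p.1 ⟨(i : ℕ) / 2, by have := i.isLt; omega⟩
  else ⟨(((p.1 ⟨(i : ℕ) / 2, by have := i.isLt; omega⟩ : ℕ) : ZMod q) +
    p.2 ⟨(i : ℕ) / 2, by have := i.isLt; omega⟩).val, ZMod.val_lt _⟩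

lemma unsplit_ev [NeZero q] (p : (Fin m → Fin q) × (Fin m → ZMod q)) (j : Fin m) :
    unsplit q m p (evI m j) = p.1 j := by
  have hmod : ((evI m j : Fin (2 * m)) : ℕ) % 2 = 0 := by simp only [evI]; omega
  rw [unsplit, dif_pos hmod]
  exact congrArg p.1 (Fin.ext (by simp only [evI]; omega))

lemma unsplit_od [NeZero q] (p : (Fin m → Fin q) × (Fin m → ZMod q)) (j : Fin m) :
    ((unsplit q m p (odI m j) : ℕ) : ZMod q) = ((p.1 j : ℕ) : ZMod q) + p.2 j := by
  have hmod : ¬ ((odI m j : Fin (2 * m)) : ℕ) % 2 = 0 := by simp only [odI]; omega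
  have hidx : (⟨((odI m j : Fin (2 * m)) : ℕ) / 2, by have := (odI m j).isLt; omega⟩ : Fin m)
      = j := Fin.ext (by simp only [odI]; omega)
  rw [unsplit, dif_neg hmod]
  simp only [Fin.val_mk]
  rw [hidx, ZMod.natCast_val, ZMod.cast_id]

/-- Splitting a word of length `2m` into its even part and its pair differences. -/
def splitEquiv (q m : ℕ) [NeZero q] :
    (Fin (2 * m) → Fin q) ≃ ((Fin m → Fin q) × (Fin m → ZMod q)) where
  toFun z := (fun j => z (evI m j), pairDiff q m z)
  invFun p := unsplit q m p
  left_inv z := by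
    funext i
    rcases ev_or_od i ⟨(i : ℕ) / 2, by have := i.isLt; omega⟩ rfl with h | h <;> rw [h]
    · exact unsplit_ev _ _
    · set j : Fin m := ⟨(i : ℕ) / 2, by have := i.isLt; omega⟩
      have hv := unsplit_od (fun j => z (evI m j), pairDiff q m z) j
      have hv' : ((unsplit q m (fun j => z (evI m j), pairDiff q m z) (odI m j) : ℕ) : ZMod q)
          = ((z (odI m j) : ℕ) : ZMod q) := by
        rw [hv]
        show ((z (evI m j) : ℕ) : ZMod q) + pairDiff q m z j = _
        rw [pairDiff_apply]; ring
      apply Fin.ext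
      have h1 := ZMod.val_cast_of_lt (a := (unsplit q m (fun j => z (evI m j),
        pairDiff q m z) (odI m j) : ℕ)) (by exact (unsplit q m _ (odI m j)).isLt)
      have h2 := ZMod.val_cast_of_lt (a := (z (odI m j) : ℕ)) (z (odI m j)).isLt
      rw [← h1, ← h2, hv']
  right_inv p := by
    refine Prod.ext ?_ ?_
    · funext j
      exact unsplit_ev p j
    · funext j
      show pairDiff q m (unsplit q m p) j = p.2 j
      rw [pairDiff_apply, unsplit_od, unsplit_ev]
      ring

/-- Repackaging a subtype of a product by a predicate on the second factor. -/
def prodSub {A B : Type*} (S : Set B) : {p : A × B // p.2 ∈ S} ≃ A × S where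
  toFun p := (p.1.1, ⟨p.1.2, p.2⟩)
  invFun p := ⟨(p.1, p.2.1), p.2.2⟩
  left_inv p := rfl
  right_inv p := rfl

end ConcatAux

open ConcatAux in
/-- If `C' ⊆ ℤ_qᵐ` (with `q > 2`) is single-error-correcting for `ℛ_q` and `|C'| = K`,
then the concatenated code `C = {z ∈ {0,…,q-1}^{2m} : pairDiff z ∈ C'}` has cardinality
`qᵐ·K` and is a `1`-code of length `2m`: `Δ(x,y) ≥ 2` for distinct `x, y ∈ C`. -/
theorem concat_even_one_code (q m : ℕ) (hq : 2 < q)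
    (C' : Set (Fin m → ZMod q)) (K : ℕ) (hK : Nat.card C' = K)
    (hsec : ∀ c ∈ C', ∀ c' ∈ C', c ≠ c' → Disjoint (RBall c) (RBall c')) :
    Set.ncard {z : Fin (2 * m) → Fin q | pairDiff q m z ∈ C'} = q ^ m * K ∧
    ∀ x y : Fin (2 * m) → Fin q,
      pairDiff q m x ∈ C' → pairDiff q m y ∈ C' → x ≠ y → 2 ≤ Dasym x y := by
  haveI : NeZero q := ⟨by omega⟩
  constructor
  · have e : {z : Fin (2 * m) → Fin q | pairDiff q m z ∈ C'} ≃ ((Fin m → Fin q) × C') :=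
      ((splitEquiv q m).subtypeEquiv (fun z => Iff.rfl)).trans (prodSub C')
    rw [← Nat.card_coe_set_eq, Nat.card_congr e, Nat.card_prod, hK]
    congr 1
    simp [Nat.card_eq_fintype_card]
  · intro x y hx hy hne
    by_contra hcon
    push_neg at hcon
    have h1 : Nasym x y ≤ 1 := by
      have := le_max_left (Nasym x y) (Nasym y x)
      unfold Dasym at hcon
      linarith
    have h2 : Nasym y x ≤ 1 := by
      have := le_max_right (Nasym x y) (Nasym y x)
      unfold Dasym at hcon
      linarith
    obtain ⟨i₀, hi⟩ := Function.ne_iff.mp hne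
    have hdv : ((x i₀ : ℕ) : ℤ) ≠ ((y i₀ : ℕ) : ℤ) := by
      intro h; exact hi (Fin.ext (by exact_mod_cast h))
    have hb1 := single_le h1 i₀
    have hb2 := single_le h2 i₀
    rcases lt_or_gt_of_ne hdv with hlt | hgt
    · exact key q m hq C' hsec x y hx hy h1 h2 i₀ (by omega)
    · exact key q m hq C' hsec y x hy hx h2 h1 i₀ (by omega)
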